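/- Let C → B be a surjective ring homomorphism with kernel 𝔞, and let R be a simplicial C-algebra with R₀ = C, each Rₙ a polynomial C-algebra, together with a surjective quasi-isomorphism R → B (constant simplicial ring). Let I = ker(R ⊗_C B → B). Then H₀(I) = 0 and Hₙ(I) ≅ Torₙ^C(B, B) for all n > 0. -/

import Mathlib

open CategoryTheory AlgebraicTopology Limits MonoidalCategory TensorProduct

noncomputable instance (C : Type) [CommRing C] : Abelian (SimplicialObject (ModuleCat C)) := by
  dsimp [SimplicialObject]; infer_instance

/-- The homology of a simplicial module (via its alternating face map complex). -/
noncomputable abbrev simpHomologyC (C : Type) [CommRing C]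
    (T : SimplicialObject (ModuleCat C)) (n : ℕ) : ModuleCat C :=
  ((alternatingFaceMapComplex (ModuleCat C)).obj T).homology n

instance (C : Type) [CommRing C] : (alternatingFaceMapComplex (ModuleCat C)).Additive where
  map_add := by intros; ext n; rfl

instance (C : Type) [CommRing C] (m : SimplexCategoryᵒᵖ) :
    Functor.PreservesZeroMorphisms
      ((CategoryTheory.evaluation SimplexCategoryᵒᵖ (ModuleCat C)).obj m :
        SimplicialObject (ModuleCat C) ⥤ ModuleCat C) where
  map_zero := by intros; rfl

namespace Stmt8Aux
variable {D : Type*} [Category D]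

/-- The constant augmented simplicial object on `M`. -/
@[simps]
def constAug (M : D) : SimplicialObject.Augmented D where
  left := (CategoryTheory.Functor.const _).obj M
  right := M
  hom := 𝟙 _

/-- The constant augmented simplicial object has an extra degeneracy. -/
def constAugED (M : D) : SimplicialObject.Augmented.ExtraDegeneracy (constAug M) where
  s' := 𝟙 M
  s _ := 𝟙 M
  s'_comp_ε := by simp [constAug]
  s₀_comp_δ₁ := by simp [constAug, SimplicialObject.δ]
  s_comp_δ₀ _ := by simp [constAug, SimplicialObject.δ]
  s_comp_δ _ _ := by simp [constAug, SimplicialObject.δ]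
  s_comp_σ _ _ := by simp [constAug, SimplicialObject.σ]

/-- The alternating face map complex commutes with additive functors. -/
noncomputable def mapAFMCIso {D : Type*} [Category D] [Preadditive D] {E : Type*} [Category E]
    [Preadditive E] (G : D ⥤ E) [G.Additive] (X : SimplicialObject D) :
    (G.mapHomologicalComplex (ComplexShape.down ℕ)).obj ((alternatingFaceMapComplex D).obj X) ≅
      (alternatingFaceMapComplex E).obj (((SimplicialObject.whiskering D E).obj G).obj X) :=
  eqToIso (Functor.congr_obj (map_alternatingFaceMapComplex G) X)

/-- The alternating face map complex of a constant simplicial object is homotopy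
equivalent to the single complex. -/
noncomputable def constSingleHE (M : D) [Preadditive D] [Limits.HasZeroObject D] :
    HomotopyEquiv ((alternatingFaceMapComplex D).obj ((CategoryTheory.Functor.const _).obj M))
      ((ChainComplex.single₀ D).obj M) :=
  (constAugED M).homotopyEquiv

end Stmt8Aux

/-- `Hₙ(R ⊗_C B)` computes `Torₙ^C(B, B)`, for `R` a simplicial polynomial resolution. -/
theorem stmt8AuxTor (C B : Type) [CommRing C] [CommRing B] [Algebra C B]
    (R : SimplicialObject (AlgCat C))
    (aug : R ⟶ (Functor.const SimplexCategoryᵒᵖ).obj (AlgCat.of C B))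
    (hpoly : ∀ n : SimplexCategoryᵒᵖ, ∃ σ : Type,
      Nonempty (R.obj n ≃ₐ[C] MvPolynomial σ C))
    (hquasi : QuasiIso ((alternatingFaceMapComplex (ModuleCat C)).map
      (((SimplicialObject.whiskering _ _).obj (forget₂ (AlgCat C) (ModuleCat C))).map aug)))
    (n : ℕ) :
    Nonempty ((((alternatingFaceMapComplex (ModuleCat C)).obj
        (((SimplicialObject.whiskering _ _).obj
          ((forget₂ (AlgCat C) (ModuleCat C)) ⋙
            tensorRight (ModuleCat.of C B))).obj R)).homology n) ≅
      ((Tor (ModuleCat C) n).obj (ModuleCat.of C B)).obj (ModuleCat.of C B)) := by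
  let F := forget₂ (AlgCat C) (ModuleCat C)
  let Bm := ModuleCat.of C B
  let RM := ((SimplicialObject.whiskering _ _).obj F).obj R
  let K := (alternatingFaceMapComplex (ModuleCat C)).obj RM
  -- degreewise projectivity
  have hproj : ∀ m : ℕ, Projective (K.X m) := by
    intro m
    obtain ⟨σ, ⟨eq⟩⟩ := hpoly (Opposite.op (SimplexCategory.mk m))
    have : Module.Free C (R.obj (Opposite.op (SimplexCategory.mk m))) :=
      Module.Free.of_equiv eq.symm.toLinearEquiv
    exact ModuleCat.projective_of_free
      (Module.Free.chooseBasis C (R.obj (Opposite.op (SimplexCategory.mk m))))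
  -- the whiskered constant simplicial object is the constant one
  let cIso : ((SimplicialObject.whiskering _ _).obj F).obj
      ((Functor.const SimplexCategoryᵒᵖ).obj (AlgCat.of C B)) ≅
      (Functor.const SimplexCategoryᵒᵖ).obj Bm :=
    NatIso.ofComponents (fun _ => Iso.refl _) (by intros; simp [F]; rfl)
  -- the augmentation of the resolution
  let π : K ⟶ (ChainComplex.single₀ (ModuleCat C)).obj Bm :=
    (alternatingFaceMapComplex (ModuleCat C)).map
        (((SimplicialObject.whiskering _ _).obj F).map aug) ≫
      (alternatingFaceMapComplex (ModuleCat C)).map cIso.hom ≫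
      (Stmt8Aux.constSingleHE Bm).hom
  have hπ : QuasiIso π := by
    have h2 : QuasiIso ((alternatingFaceMapComplex (ModuleCat C)).map cIso.hom) := inferInstance
    have h3 : QuasiIso (Stmt8Aux.constSingleHE Bm).hom := inferInstance
    exact inferInstance
  let P : ProjectiveResolution Bm :=
    { complex := K, projective := hproj, π := π, quasiIso := hπ }
  -- tensoring on the left with `B` is isomorphic to tensoring on the right
  let bIso : (tensoringLeft (ModuleCat C)).obj Bm ≅ tensorRight Bm :=
    NatIso.ofComponents (fun X => β_ Bm X) (by intros; simp)
  let i1 := P.isoLeftDerivedObj ((tensoringLeft (ModuleCat C)).obj Bm) n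
  let i2 : (((tensoringLeft (ModuleCat C)).obj Bm).mapHomologicalComplex
      (ComplexShape.down ℕ)).obj K ≅ ((tensorRight Bm).mapHomologicalComplex _).obj K :=
    (NatIso.mapHomologicalComplex bIso _).app K
  let i3 : ((tensorRight Bm).mapHomologicalComplex (ComplexShape.down ℕ)).obj K ≅
      (alternatingFaceMapComplex (ModuleCat C)).obj
        (((SimplicialObject.whiskering _ _).obj (F ⋙ tensorRight Bm)).obj R) :=
    Stmt8Aux.mapAFMCIso (tensorRight Bm) RM
  exact ⟨((HomologicalComplex.homologyFunctor _ _ n).mapIso (i2 ≪≫ i3)).symm ≪≫ i1.symm⟩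

theorem stmt8 (C B : Type) [CommRing C] [CommRing B] [Algebra C B]
    (hsurj : Function.Surjective (algebraMap C B))
    (R : SimplicialObject (AlgCat C))
    (aug : R ⟶ (Functor.const SimplexCategoryᵒᵖ).obj (AlgCat.of C B))
    -- `R₀ = C`
    (h0 : Nonempty (R.obj (Opposite.op (SimplexCategory.mk 0)) ≃ₐ[C] C))
    -- each `Rₙ` is a polynomial `C`-algebra
    (hpoly : ∀ n : SimplexCategoryᵒᵖ, ∃ σ : Type,
      Nonempty (R.obj n ≃ₐ[C] MvPolynomial σ C))
    -- the augmentation is a degreewise surjective quasi-isomorphism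
    (haugsurj : ∀ n : SimplexCategoryᵒᵖ, Function.Surjective (aug.app n))
    (hquasi : QuasiIso ((alternatingFaceMapComplex (ModuleCat C)).map
      (((SimplicialObject.whiskering _ _).obj (forget₂ (AlgCat C) (ModuleCat C))).map aug)))
    -- the augmentation `R ⊗_C B → B` of the simplicial module `R ⊗_C B`
    (ε : ((SimplicialObject.whiskering _ _).obj
            ((forget₂ (AlgCat C) (ModuleCat C)) ⋙ tensorRight (ModuleCat.of C B))).obj R ⟶
          (Functor.const SimplexCategoryᵒᵖ).obj (ModuleCat.of C B))
    (hε : ∀ (n : SimplexCategoryᵒᵖ) (r : R.obj n) (b : B),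
      ε.app n (r ⊗ₜ[C] b) = (show B from aug.app n r) * b) :
    Limits.IsZero (simpHomologyC C (kernel ε) 0) ∧
    (∀ n : ℕ, 0 < n →
      Nonempty (simpHomologyC C (kernel ε) n ≅
        ((Tor (ModuleCat C) n).obj (ModuleCat.of C B)).obj (ModuleCat.of C B))) := by
  obtain ⟨e0⟩ := h0
  set n0 : SimplexCategoryᵒᵖ := Opposite.op (SimplexCategory.mk 0) with hn0
  -- ### Part 1 : `H₀(I) = 0`, since `I₀ = 0`
  have haug1 : ∀ r : R.obj n0, (show B from aug.app n0 r) = algebraMap C B (e0 r) := by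
    intro r
    have h := Subsingleton.elim (((aug.app n0).hom).comp (e0.symm : C →ₐ[C] (R.obj n0)))
      (Algebra.ofId C B)
    calc (aug.app n0).hom r = (aug.app n0).hom (e0.symm (e0 r)) := by rw [e0.symm_apply_apply]
    _ = (((aug.app n0).hom).comp (e0.symm : C →ₐ[C] (R.obj n0))) (e0 r) := rfl
    _ = algebraMap C B (e0 r) := by rw [h]; rfl
  have hr : ∀ r : R.obj n0, (e0 r) • (e0.symm 1 : R.obj n0) = r := by
    intro r
    calc (e0 r) • (e0.symm 1 : R.obj n0) = e0.symm ((e0 r) • 1) := by rw [map_smul]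
    _ = r := by rw [smul_eq_mul, mul_one, e0.symm_apply_apply]
  have hkey : ∀ x, x = (e0.symm 1 : R.obj n0) ⊗ₜ[C] (show B from ε.app n0 x) := by
    intro x
    induction x using TensorProduct.induction_on with
    | zero => erw [map_zero, TensorProduct.tmul_zero]
    | tmul r b =>
        rw [hε, haug1, ← Algebra.smul_def]
        show r ⊗ₜ[C] b = (e0.symm 1 : R.obj n0) ⊗ₜ[C] (e0 r • b)
        rw [← TensorProduct.smul_tmul, hr]
    | add x y hx hy =>
        erw [map_add]
        conv_lhs => rw [hx, hy]
        rw [TensorProduct.tmul_add]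
  have hinj : Function.Injective (ε.app n0) := by
    intro x y hxy
    rw [hkey x, hkey y, hxy]
  have hmono : Mono (ε.app n0) := (ModuleCat.mono_iff_injective _).mpr hinj
  have hcomp : (kernel.ι ε).app n0 ≫ ε.app n0 = 0 := by
    rw [← NatTrans.comp_app, kernel.condition]; rfl
  have hk0 : IsZero ((kernel ε).obj n0) := by
    have : Mono ((kernel.ι ε).app n0) := inferInstance
    exact IsZero.of_mono_eq_zero _ (zero_of_comp_mono _ hcomp)
  have part1 : Limits.IsZero (simpHomologyC C (kernel ε) 0) := by
    rw [← HomologicalComplex.exactAt_iff_isZero_homology]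
    exact ShortComplex.exact_of_isZero_X₂ _ hk0
  refine ⟨part1, fun n hn => ?_⟩
  -- ### Part 2 : the long exact sequence
  have hεsurj : ∀ m : SimplexCategoryᵒᵖ, Function.Surjective (ε.app m) := by
    intro m b
    obtain ⟨r, hrr⟩ := haugsurj m 1
    refine ⟨r ⊗ₜ[C] (show B from b), (hε m r b).trans ?_⟩
    rw [hrr]
    simp
  let AF := alternatingFaceMapComplex (ModuleCat C)
  let S0 : ShortComplex (SimplicialObject (ModuleCat C)) :=
    ShortComplex.mk (kernel.ι ε) ε (kernel.condition ε)
  let S : ShortComplex (ChainComplex (ModuleCat C) ℕ) := S0.map AF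
  have hSE : S.ShortExact := by
    apply HomologicalComplex.shortExact_of_degreewise_shortExact
    intro i
    haveI hGz : Functor.PreservesZeroMorphisms
        ((CategoryTheory.evaluation SimplexCategoryᵒᵖ (ModuleCat C)).obj
          (Opposite.op (SimplexCategory.mk i)) :
            SimplicialObject (ModuleCat C) ⥤ ModuleCat C) := ⟨fun X Y => rfl⟩
    haveI hGl : Limits.PreservesLimits
        ((CategoryTheory.evaluation SimplexCategoryᵒᵖ (ModuleCat C)).obj
          (Opposite.op (SimplexCategory.mk i)) :
            SimplicialObject (ModuleCat C) ⥤ ModuleCat C) := inferInstance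
    haveI hepi : Epi (ε.app (Opposite.op (SimplexCategory.mk i))) :=
      ConcreteCategory.epi_of_surjective _ (hεsurj _)
    have hS' : (ShortComplex.mk (kernel.ι (ε.app (Opposite.op (SimplexCategory.mk i))))
        (ε.app (Opposite.op (SimplexCategory.mk i))) (kernel.condition _)).ShortExact :=
      { exact := ShortComplex.exact_of_f_is_kernel _ (kernelIsKernel _) }
    refine (ShortComplex.shortExact_iff_of_iso ?_).mpr hS'
    refine ShortComplex.isoMk
      (@asIso _ _ _ _ (kernelComparison ε
        ((CategoryTheory.evaluation SimplexCategoryᵒᵖ (ModuleCat C)).obj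
          (Opposite.op (SimplexCategory.mk i)))) (by rw [← PreservesKernel.iso_hom]; exact Iso.isIso_hom _))
      (Iso.refl _) (Iso.refl _) ?_ ?_
    · simp only [asIso_hom, Iso.refl_hom, Category.comp_id]
      exact kernelComparison_comp_ι ε _
    · simp only [Iso.refl_hom, Category.id_comp, Category.comp_id]
      rfl
  have hX3 : ∀ m : ℕ, 0 < m → IsZero (S.X₃.homology m) := by
    intro m hm
    have hq : QuasiIso (Stmt8Aux.constSingleHE (ModuleCat.of C B)).hom := inferInstance
    have h : IsIso (HomologicalComplex.homologyMap
        (Stmt8Aux.constSingleHE (ModuleCat.of C B)).hom m) :=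
      (quasiIsoAt_iff_isIso_homologyMap _ _).mp (hq.quasiIsoAt m)
    exact IsZero.of_iso
      (HomologicalComplex.isZero_single_obj_homology (ComplexShape.down ℕ) 0
        (ModuleCat.of C B) m (by omega))
      (@asIso _ _ _ _ (HomologicalComplex.homologyMap (Stmt8Aux.constSingleHE (ModuleCat.of C B)).hom m) h)
  have h1 : IsZero (S.X₃.homology (n + 1)) := hX3 _ (by omega)
  have h2 : IsZero (S.X₃.homology n) := hX3 _ hn
  have hrel : (ComplexShape.down ℕ).Rel (n + 1) n := by simp
  have e1 := hSE.homology_exact₁ (n + 1) n hrel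
  have e2 := hSE.homology_exact₂ n
  have hm : Mono (HomologicalComplex.homologyMap S.f n) := e1.mono_g (h1.eq_of_src _ _)
  have he : Epi (HomologicalComplex.homologyMap S.f n) := e2.epi_f (h2.eq_of_tgt _ _)
  have : IsIso (HomologicalComplex.homologyMap S.f n) := isIso_of_mono_of_epi _
  obtain ⟨tor⟩ := stmt8AuxTor C B R aug hpoly hquasi n
  exact ⟨@asIso _ _ _ _ (HomologicalComplex.homologyMap S.f n) this ≪≫ tor⟩
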